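/- For every a ∈ A and every J ⊆ X, the identity (a·u_J) ⊗ u_J = u_J ⊗ (u_J·a) holds in the tensor product A ⊗_ℂ A. -/

import Mathlib

/-- The power set `2^X` of `X`, regarded as a commutative monoid under
union, with identity the empty set (a unital semilattice). -/
def finsetUnionMonoid (X : Type*) [DecidableEq X] : CommMonoid (Finset X) where
  mul := (· ∪ ·)
  one := ∅
  mul_assoc := Finset.union_assoc
  one_mul := Finset.empty_union
  mul_one := Finset.union_empty
  mul_comm := Finset.union_comm

attribute [local instance] finsetUnionMonoid

variable {X : Type*} [Fintype X] [DecidableEq X]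

/-- The basis element `e_J` of the semigroup algebra `A = MonoidAlgebra ℂ (2^X)`
supported at `J ⊆ X`; one has `e_J * e_K = e_{J ∪ K}` and `e_∅ = 1`. -/
noncomputable def e (J : Finset X) : MonoidAlgebra ℂ (Finset X) :=
  MonoidAlgebra.single J 1

/-- `u_J = (∏_{i ∈ J} e_{{i}}) * (∏_{k ∈ X \ J} (e_∅ - e_{{k}}))`. -/
noncomputable def u (J : Finset X) : MonoidAlgebra ℂ (Finset X) :=
  (∏ i ∈ J, e {i}) * ∏ k ∈ Jᶜ, (e ∅ - e {k})

lemma e_mul_e (A B : Finset X) : e A * e B = e (A ∪ B) := by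
  simp only [e, MonoidAlgebra.single_mul_single, one_mul]
  rfl

lemma e_empty : (e (∅ : Finset X)) = 1 := rfl

lemma prod_e_singleton (J : Finset X) : (∏ i ∈ J, e ({i} : Finset X)) = e J := by
  induction J using Finset.induction_on with
  | empty => simp [e_empty]
  | insert _ _ h ih =>
    rw [Finset.prod_insert h, ih, e_mul_e, ← Finset.insert_eq]

lemma u_eq (J : Finset X) : u J = e J * ∏ k ∈ Jᶜ, (1 - e {k}) := by
  rw [u, prod_e_singleton, e_empty]

lemma e_mul_u (K J : Finset X) : e K * u J = if K ⊆ J then u J else 0 := by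
  split_ifs with h
  · rw [u_eq, ← mul_assoc, e_mul_e, Finset.union_eq_right.mpr h, ← u_eq]
  · obtain ⟨k, hkK, hkJ⟩ := Finset.not_subset.mp h
    have hk : k ∈ Jᶜ := Finset.mem_compl.mpr hkJ
    rw [u_eq, ← Finset.mul_prod_erase _ _ hk]
    have h1 : e K = e {k} * e K := by
      rw [e_mul_e]; congr 1
      simp [Finset.singleton_subset_iff.mpr hkK, Finset.union_eq_right.mpr,
        Finset.singleton_subset_iff.mpr hkK]
    have h2 : e {k} * (1 - e ({k} : Finset X)) = 0 := by
      rw [mul_sub, mul_one, e_mul_e, Finset.union_self, sub_self]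
    calc e K * (e J * ((1 - e {k}) * ∏ x ∈ Jᶜ.erase k, (1 - e {x})))
        = (e {k} * (1 - e {k})) * (e K * e J * ∏ x ∈ Jᶜ.erase k, (1 - e {x})) := by
          conv_lhs => rw [h1]
          ring
      _ = 0 := by rw [h2, zero_mul]

open TensorProduct in
/-- For every `a ∈ A` and every `J ⊆ X`, `(a * u_J) ⊗ u_J = u_J ⊗ (u_J * a)` in `A ⊗[ℂ] A`. -/
theorem au_tmul_u (a : MonoidAlgebra ℂ (Finset X)) (J : Finset X) :
    (a * u J) ⊗ₜ[ℂ] (u J) = (u J) ⊗ₜ[ℂ] (u J * a) := by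
  induction a using MonoidAlgebra.induction_on with
  | of K =>
    have : MonoidAlgebra.of ℂ (Finset X) K = e K := rfl
    rw [this, mul_comm (u J) (e K), e_mul_u]
    split_ifs <;> simp
  | add f g hf hg =>
    rw [add_mul, mul_add, TensorProduct.add_tmul, TensorProduct.tmul_add, hf, hg]
  | smul r f hf =>
    rw [smul_mul_assoc, mul_smul_comm, ← TensorProduct.smul_tmul', TensorProduct.tmul_smul, hf]
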